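/- Let Λ be a finite alphabet, let X ⊆ Λ^ℕ be a subshift, and let θ be the standard partial action of 𝔽 on X. Given g ∈ 𝔽 with g ≠ 1, suppose x ∈ X_{g⁻¹} is a fixed point of θ_g, i.e. θ_g(x) = x. Then: (i) g admits a decomposition in reduced form as g = ν α^{±1} ν⁻¹ with α, ν ∈ 𝔽₊ and α a nonempty word; (ii) x = ν α^∞, so that α is a circuit, and x is the unique fixed point of θ_g. -/

import Mathlib

open scoped Classical

namespace SubshiftPaper

variable {Λ : Type}

/-- The left shift on infinite words. -/
def shiftMap (x : ℕ → Λ) : ℕ → Λ := fun n => x (n + 1)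

/-- Concatenation of a finite word with an infinite word. -/
def cat (α : List Λ) (y : ℕ → Λ) : ℕ → Λ := fun n => α.getD n (y (n - α.length))

/-- `α` is a prefix of the infinite word `x`. -/
def Pref (α : List Λ) (x : ℕ → Λ) : Prop := ∀ (i : ℕ) (h : i < α.length), x i = α[i]

/-- The tail of `x` after `n` letters. -/
def tail (x : ℕ → Λ) (n : ℕ) : ℕ → Λ := fun i => x (n + i)

/-- `α` occurs in `x` at position `n`. -/
def OccursAt (α : List Λ) (x : ℕ → Λ) (n : ℕ) : Prop :=
  ∀ (i : ℕ) (h : i < α.length), x (n + i) = α[i]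

/-- `α` occurs in `x` (as a contiguous block of letters). -/
def Occurs (α : List Λ) (x : ℕ → Λ) : Prop := ∃ n, OccursAt α x n

/-- `X` is a subshift: a nonempty closed shift-invariant subset. -/
def IsSubshift [TopologicalSpace Λ] (X : Set (ℕ → Λ)) : Prop :=
  X.Nonempty ∧ IsClosed X ∧ ∀ x ∈ X, shiftMap x ∈ X

/-- The set of infinite words avoiding all words in `F`. -/
def ForbidSpace (F : Set (List Λ)) : Set (ℕ → Λ) := {x | ∀ α ∈ F, ¬ Occurs α x}

/-- `X` is a subshift of finite type. -/
def IsSFT (X : Set (ℕ → Λ)) : Prop := ∃ F : Set (List Λ), F.Finite ∧ X = ForbidSpace F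

/-- The follower set of a finite word. -/
def follower (X : Set (ℕ → Λ)) (α : List Λ) : Set (ℕ → Λ) := {y | y ∈ X ∧ cat α y ∈ X}

/-- The cylinder of a finite word. -/
def cylinder (X : Set (ℕ → Λ)) (α : List Λ) : Set (ℕ → Λ) := {x | x ∈ X ∧ Pref α x}

/-- The language of `X`. -/
def Language (X : Set (ℕ → Λ)) : Set (List Λ) := {α | ∃ x ∈ X, Occurs α x}

/-- The embedding of finite words into the free group. -/
def wd (α : List Λ) : FreeGroup Λ := (α.map FreeGroup.of).prod

/-- Indicator function of a set of group elements. -/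
noncomputable def chi (s : Set (FreeGroup Λ)) : FreeGroup Λ → Bool :=
  fun g => if g ∈ s then true else false

/-- The set `ξ_x ⊆ 𝔽`. -/
def xiSet [DecidableEq Λ] (X : Set (ℕ → Λ)) (x : ℕ → Λ) : Set (FreeGroup Λ) :=
  {g | ∃ α β : List Λ, g = wd α * (wd β)⁻¹ ∧
        FreeGroup.norm g = α.length + β.length ∧
        Pref α x ∧ tail x α.length ∈ follower X α ∩ follower X β}

/-- `ξ_x` as an element of `2^𝔽`. -/
noncomputable def xiB [DecidableEq Λ] (X : Set (ℕ → Λ)) (x : ℕ → Λ) : FreeGroup Λ → Bool :=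
  chi (xiSet X x)

/-- The spectrum `Ω_X`: the closure of `{ξ_x : x ∈ X}` in `2^𝔽`. -/
noncomputable def Omega [DecidableEq Λ] (X : Set (ℕ → Λ)) : Set (FreeGroup Λ → Bool) :=
  closure ((fun x => xiB X x) '' X)

/-- Left translation of an element of `2^𝔽`. -/
def translate (g : FreeGroup Λ) (ξ : FreeGroup Λ → Bool) : FreeGroup Λ → Bool :=
  fun h => ξ (g⁻¹ * h)

/-- `x` is the stem of `ξ`: `ξ ∩ 𝔽₊` is exactly the set of prefixes of `x`. -/
def IsStem (ξ : FreeGroup Λ → Bool) (x : ℕ → Λ) : Prop :=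
  {g | ξ g = true} ∩ {g | ∃ α : List Λ, g = wd α} =
    {g | ∃ α : List Λ, g = wd α ∧ Pref α x}

/-- `x` is the stem of `ξ` at `g`: `ξ ∩ g𝔽₊ = {gα : α is a prefix of x}`. -/
def IsStemAt (ξ : FreeGroup Λ → Bool) (g : FreeGroup Λ) (x : ℕ → Λ) : Prop :=
  {h | ξ h = true} ∩ {h | ∃ α : List Λ, h = g * wd α} =
    {h | ∃ α : List Λ, h = g * wd α ∧ Pref α x}

/-- The orbit of `ξ` under the spectral partial action. -/
def Orbit (ξ : FreeGroup Λ → Bool) : Set (FreeGroup Λ → Bool) :=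
  {η | ∃ g : FreeGroup Λ, ξ g⁻¹ = true ∧ η = translate g ξ}

/-- Topological freeness of the spectral partial action. -/
noncomputable def TopFree [DecidableEq Λ] (X : Set (ℕ → Λ)) : Prop :=
  ∀ g : FreeGroup Λ, g ≠ 1 →
    ∀ U : Set (FreeGroup Λ → Bool), IsOpen U →
      (U ∩ Omega X ⊆ {ξ | ξ g⁻¹ = true ∧ translate g ξ = ξ}) → U ∩ Omega X = ∅

/-- The periodic infinite word `γ^∞`. -/
noncomputable def perInf [Nonempty Λ] (γ : List Λ) : ℕ → Λ :=
  fun n => γ.getD (n % γ.length) (Classical.arbitrary Λ)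

/-- `n`-fold concatenation of a finite word with itself. -/
def rep : ℕ → List Λ → List Λ
  | 0, _ => []
  | n + 1, γ => γ ++ rep n γ

/-- `γ` is a circuit relative to `X`. -/
noncomputable def IsCircuit [Nonempty Λ] (X : Set (ℕ → Λ)) (γ : List Λ) : Prop :=
  γ ≠ [] ∧ perInf γ ∈ X

/-- `y` is an exit for the circuit `γ`. -/
noncomputable def IsExit [Nonempty Λ] (X : Set (ℕ → Λ)) (γ : List Λ) (y : ℕ → Λ) : Prop :=
  y ≠ perInf γ ∧ cat γ y ∈ X

/-- `z` is a strong exit for the circuit `γ`. -/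
noncomputable def IsStrongExit [Nonempty Λ] (X : Set (ℕ → Λ)) (γ : List Λ) (z : ℕ → Λ) : Prop :=
  z ≠ perInf γ ∧ ∀ n : ℕ, cat (rep n γ) z ∈ X

/-- The sets `X_g` of the standard partial action. -/
def Xg [DecidableEq Λ] (X : Set (ℕ → Λ)) (g : FreeGroup Λ) : Set (ℕ → Λ) :=
  {x | ∃ α β : List Λ, g = wd α * (wd β)⁻¹ ∧
        FreeGroup.norm g = α.length + β.length ∧
        ∃ y ∈ follower X α ∩ follower X β, x = cat α y}

/-- `x` is a fixed point for `θ_g`. -/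
def IsThetaFixed [DecidableEq Λ] (X : Set (ℕ → Λ)) (g : FreeGroup Λ) (x : ℕ → Λ) : Prop :=
  ∃ α β : List Λ, g = wd α * (wd β)⁻¹ ∧
    FreeGroup.norm g = α.length + β.length ∧
    ∃ y ∈ follower X α ∩ follower X β, x = cat β y ∧ cat α y = x

/-- `x` may be collectively reached from the finite set `B`. -/
def CollReached (X : Set (ℕ → Λ)) (B : Finset (List Λ)) (x : ℕ → Λ) : Prop :=
  ∃ α γ : List Λ, Pref α x ∧ ∀ β ∈ B, cat (β ++ γ) (tail x α.length) ∈ X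

/-- `X` is collectively cofinal. -/
def CollCofinal (X : Set (ℕ → Λ)) : Prop :=
  ∀ B : Finset (List Λ), ↑B ⊆ Language X → (⋂ β ∈ B, follower X β).Nonempty →
    ∀ x ∈ X, CollReached X B x

/-- `X` is strongly cofinal. -/
def StrongCofinal (X : Set (ℕ → Λ)) : Prop :=
  ∀ β ∈ Language X, ∃ M : ℕ, ∀ x ∈ X, ∃ α γ : List Λ, Pref α x ∧
    cat (β ++ γ) (tail x α.length) ∈ X ∧ α.length + γ.length ≤ M

/-- The even shift. -/
def evenShift : Set (ℕ → Fin 2) :=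
  ForbidSpace {w | ∃ n : ℕ, w = 0 :: (List.replicate (2 * n + 1) 1 ++ [0])}



section Aux
variable {Λ : Type}

lemma cat_eval_lt (α : List Λ) (y : ℕ → Λ) {n : ℕ} (h : n < α.length) :
    cat α y n = α[n] := by
  simp [cat, List.getElem?_eq_getElem h]

lemma cat_eval_ge (α : List Λ) (y : ℕ → Λ) {n : ℕ} (h : α.length ≤ n) :
    cat α y n = y (n - α.length) := by
  simp [cat, List.getElem?_eq_none h]

lemma cat_eval_add (α : List Λ) (y : ℕ → Λ) (n : ℕ) :
    cat α y (α.length + n) = y n := by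
  rw [cat_eval_ge α y (Nat.le_add_right _ _), Nat.add_sub_cancel_left]

lemma cat_cancel {α : List Λ} {y z : ℕ → Λ} (h : cat α y = cat α z) : y = z := by
  funext n
  have := congrFun h (α.length + n)
  rwa [cat_eval_add, cat_eval_add] at this

lemma cat_append (α δ : List Λ) (y : ℕ → Λ) : cat (α ++ δ) y = cat α (cat δ y) := by
  funext n
  rcases lt_or_ge n α.length with h | h
  · rw [cat_eval_lt _ _ (by simp; omega), cat_eval_lt _ _ h,
      List.getElem_append_left h]
  · rw [cat_eval_ge _ _ h]
    rcases lt_or_ge (n - α.length) δ.length with h2 | h2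
    · rw [cat_eval_lt _ _ h2, cat_eval_lt _ _ (by simp; omega),
        List.getElem_append_right (by omega)]
    · rw [cat_eval_ge _ _ h2, cat_eval_ge _ _ (by simp; omega)]
      congr 1
      simp; omega

lemma eq_perInf [Nonempty Λ] {δ : List Λ} (hδ : δ ≠ []) {y : ℕ → Λ}
    (h : cat δ y = y) : y = perInf δ := by
  have hlen : 0 < δ.length := List.length_pos_iff.mpr hδ
  funext n
  induction n using Nat.strong_induction_on with
  | _ n ih =>
    by_cases hn : n < δ.length
    · rw [← congrFun h n, cat_eval_lt _ _ hn, perInf, Nat.mod_eq_of_lt hn,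
        List.getD_eq_getElem _ _ hn]
    · push_neg at hn
      rw [← congrFun h n, cat_eval_ge _ _ hn, ih _ (by omega)]
      simp only [perInf]
      rw [Nat.mod_eq_sub_mod hn]

lemma prefix_of_cat_eq {α β : List Λ} {y : ℕ → Λ} (h : cat α y = cat β y)
    (hlen : β.length ≤ α.length) : α = β ++ α.drop β.length := by
  have hβ : β = α.take β.length := by
    apply List.ext_getElem (by simp [hlen])
    intro i h1 h2
    have hi : i < β.length := h1
    have hc := congrFun h i
    rw [cat_eval_lt α y (lt_of_lt_of_le hi hlen), cat_eval_lt β y hi] at hc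
    simp [← hc]
  conv_lhs => rw [← List.take_append_drop β.length α]
  rw [← hβ]

lemma wd_append (α δ : List Λ) : wd (α ++ δ) = wd α * wd δ := by
  simp [wd]

lemma wd_mk (α : List Λ) : wd α = FreeGroup.mk (α.map (·, true)) := by
  induction α with
  | nil => simp [wd, FreeGroup.one_eq_mk]
  | cons a l ih =>
    have : wd (a :: l) = FreeGroup.of a * wd l := by simp [wd]
    rw [this, ih]
    have hof : FreeGroup.of a = FreeGroup.mk [(a, true)] := rfl
    rw [hof, FreeGroup.mul_mk]
    rfl

lemma red_eq {w v : List (Λ × Bool)} (h : FreeGroup.Red w v)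
    (hl : w.length ≤ v.length) : w = v := by
  rcases Relation.ReflTransGen.cases_head h with rfl | ⟨u, hs, hr⟩
  · rfl
  · exfalso
    have h1 := hs.length
    have h2 := FreeGroup.Red.length_le hr
    omega

lemma toWord_of_reduced [DecidableEq Λ] (α β : List Λ) (g : FreeGroup Λ)
    (hgeq : g = wd α * (wd β)⁻¹) (hnorm : FreeGroup.norm g = α.length + β.length) :
    g.toWord = α.map (·, true) ++ (β.map (·, false)).reverse := by
  have hmk : g = FreeGroup.mk (α.map (·, true) ++ (β.map (·, false)).reverse) := by
    rw [hgeq, wd_mk, wd_mk, FreeGroup.inv_mk, FreeGroup.mul_mk]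
    congr 2
    simp [FreeGroup.invRev, Function.comp]
  have hred : FreeGroup.Red (α.map (·, true) ++ (β.map (·, false)).reverse) g.toWord := by
    rw [hmk, FreeGroup.toWord_mk]
    exact FreeGroup.reduce.red
  have hlen : g.toWord.length = α.length + β.length := hnorm
  exact (red_eq hred (by simp [hlen])).symm

lemma split_unique : ∀ (P P' N N' : List (Λ × Bool)),
    (∀ p ∈ P, p.2 = true) → (∀ p ∈ P', p.2 = true) →
    (∀ p ∈ N, p.2 = false) → (∀ p ∈ N', p.2 = false) →
    P ++ N = P' ++ N' → P = P'
  | [], [], _, _, _, _, _, _, _ => rfl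
  | [], p :: P', N, N', _, hP', hN, _, h => by
    exfalso
    have hm : p ∈ N := by rw [List.nil_append] at h; rw [h]; exact List.mem_cons_self
    have := hN p hm
    have := hP' p (List.mem_cons_self)
    simp_all
  | q :: P, [], N, N', hP, _, _, hN', h => by
    exfalso
    have hm : q ∈ N' := by rw [List.nil_append] at h; rw [← h]; exact List.mem_cons_self
    have := hN' q hm
    have := hP q (List.mem_cons_self)
    simp_all
  | q :: P, p :: P', N, N', hP, hP', hN, hN', h => by
    simp only [List.cons_append, List.cons.injEq] at h
    obtain ⟨rfl, h2⟩ := h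
    rw [split_unique P P' N N' (fun p hp => hP p (List.mem_cons_of_mem _ hp))
      (fun p hp => hP' p (List.mem_cons_of_mem _ hp)) hN hN' h2]

lemma pres_unique [DecidableEq Λ] {g : FreeGroup Λ} {α β α' β' : List Λ}
    (h : g = wd α * (wd β)⁻¹) (hn : FreeGroup.norm g = α.length + β.length)
    (h' : g = wd α' * (wd β')⁻¹) (hn' : FreeGroup.norm g = α'.length + β'.length) :
    α = α' ∧ β = β' := by
  have e1 := toWord_of_reduced α β g h hn
  have e2 := toWord_of_reduced α' β' g h' hn'
  rw [e1] at e2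
  have hPs : α.map (·, true) = α'.map (·, true) := by
    refine split_unique _ _ _ _ ?_ ?_ ?_ ?_ e2 <;>
      · intro p hp
        simp only [List.mem_map, List.mem_reverse] at hp
        obtain ⟨a, _, rfl⟩ := hp
        rfl
  have hα : α = α' := by
    have : Function.Injective (fun a : Λ => (a, true)) := fun a b hab => by
      simpa using hab
    exact List.map_injective_iff.mpr this hPs
  refine ⟨hα, ?_⟩
  rw [hPs] at e2
  have hNs := List.append_cancel_left e2
  have hrev := List.reverse_injective hNs
  have : Function.Injective (fun a : Λ => (a, false)) := fun a b hab => by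
    simpa using hab
  exact List.map_injective_iff.mpr this hrev

end Aux

/-- fixed points of the standard partial action. -/
theorem theta_fixed_points {Λ : Type} [Fintype Λ] [Nonempty Λ] [DecidableEq Λ]
    [TopologicalSpace Λ] [DiscreteTopology Λ]
    (X : Set (ℕ → Λ)) (hX : IsSubshift X)
    (g : FreeGroup Λ) (hg : g ≠ 1) (x : ℕ → Λ) (hx : IsThetaFixed X g x) :
    (∃ ν α : List Λ, α ≠ [] ∧
        FreeGroup.norm g = 2 * ν.length + α.length ∧
        (g = wd ν * wd α * (wd ν)⁻¹ ∨ g = wd ν * (wd α)⁻¹ * (wd ν)⁻¹) ∧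
        x = cat ν (perInf α) ∧ perInf α ∈ X) ∧
    (∀ x' : ℕ → Λ, IsThetaFixed X g x' → x' = x) := by
  obtain ⟨α, β, hgeq, hnorm, y, ⟨hyα, hyβ⟩, hxβ, hxα⟩ := hx
  have hcat : cat α y = cat β y := hxα.trans hxβ
  have hne : α ≠ β := by
    rintro rfl
    exact hg (by rw [hgeq, mul_inv_cancel])
  rcases lt_trichotomy β.length α.length with hlt | heq | hlt
  · -- β is a proper prefix of α
    set δ := α.drop β.length with hδdef
    have hαd : α = β ++ δ := prefix_of_cat_eq hcat hlt.le
    have hδ : δ ≠ [] := by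
      intro h0
      apply hne
      rw [hαd, h0, List.append_nil]
    have hcδ : cat δ y = y := by
      apply cat_cancel (α := β)
      rw [← cat_append, ← hαd, hcat]
    have hyp : y = perInf δ := eq_perInf hδ hcδ
    have hlenδ : α.length = β.length + δ.length := by
      rw [hαd]; simp
    have hgν : g = wd β * wd δ * (wd β)⁻¹ := by
      rw [hgeq, hαd, wd_append]
    refine ⟨⟨β, δ, hδ, by omega, Or.inl hgν, by rw [← hyp, hxβ], hyp ▸ hyα.1⟩, ?_⟩
    intro x' hx'
    obtain ⟨α', β', hgeq', hnorm', y', ⟨hy'α, hy'β⟩, hx'β, hx'α⟩ := hx'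
    obtain ⟨hA, hB⟩ := pres_unique hgeq' hnorm' hgeq hnorm
    rw [hA] at hx'α
    rw [hB] at hx'β
    have hcat' : cat α y' = cat β y' := hx'α.trans hx'β
    have hcδ' : cat δ y' = y' := by
      apply cat_cancel (α := β)
      rw [← cat_append, ← hαd, hcat']
    have : y' = y := by rw [eq_perInf hδ hcδ', hyp]
    rw [hx'β, this, ← hxβ]
  · -- equal lengths: α = β, contradiction
    exfalso
    apply hne
    apply List.ext_getElem heq.symm
    intro i h1 h2
    have hc := congrFun hcat i
    rwa [cat_eval_lt α y h1, cat_eval_lt β y h2] at hc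
  · -- α is a proper prefix of β
    set δ := β.drop α.length with hδdef
    have hβd : β = α ++ δ := prefix_of_cat_eq hcat.symm hlt.le
    have hδ : δ ≠ [] := by
      intro h0
      apply hne
      rw [hβd, h0, List.append_nil]
    have hcδ : cat δ y = y := by
      apply cat_cancel (α := α)
      rw [← cat_append, ← hβd, ← hcat]
    have hyp : y = perInf δ := eq_perInf hδ hcδ
    have hlenδ : β.length = α.length + δ.length := by
      rw [hβd]; simp
    have hgν : g = wd α * (wd δ)⁻¹ * (wd α)⁻¹ := by
      rw [hgeq, hβd, wd_append, mul_inv_rev, ← mul_assoc]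
    refine ⟨⟨α, δ, hδ, by omega, Or.inr hgν, by rw [← hyp, hxα], hyp ▸ hyα.1⟩, ?_⟩
    intro x' hx'
    obtain ⟨α', β', hgeq', hnorm', y', ⟨hy'α, hy'β⟩, hx'β, hx'α⟩ := hx'
    obtain ⟨hA, hB⟩ := pres_unique hgeq' hnorm' hgeq hnorm
    rw [hA] at hx'α
    rw [hB] at hx'β
    have hcat' : cat α y' = cat β y' := hx'α.trans hx'β
    have hcδ' : cat δ y' = y' := by
      apply cat_cancel (α := α)
      rw [← cat_append, ← hβd, ← hcat']
    have : y' = y := by rw [eq_perInf hδ hcδ', hyp]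
    rw [← hx'α, this, hxα]


end SubshiftPaper
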